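/- Let n = p·q_1^{α_1}···q_s^{α_s} where p < q_1 < ... < q_s are primes, α_i ≥ 1 for all i, and 0 ≤ s ≤ p − 1 (case 1 of a non-intersecting n with n odd), or n = 2. Then any congruence set {a_d mod d : d | n, d > 1} whose moduli are exactly the divisors of n greater than 1 is not a covering system. -/
import Mathlib

open Finset

private lemma geom_aux (q : ℕ) (hq : 1 ≤ q) (m : ℕ) :
    (q - 1) * (∑ i ∈ range m, q ^ i) = q ^ m - 1 := by
  induction m with
  | zero => simp
  | succ m ih =>
    rw [sum_range_succ, Nat.mul_add, ih, pow_succ]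
    have h1 : (q - 1) * q ^ m = q * q ^ m - q ^ m := by
      rw [Nat.sub_mul, one_mul]
    have h2 : 1 ≤ q ^ m := Nat.one_le_pow _ _ hq
    have h3 : q ^ m ≤ q * q ^ m := Nat.le_mul_of_pos_left _ hq
    have h4 : q ^ m * q = q * q ^ m := by ring
    rw [h4]
    set X := q ^ m
    set Y := q * X
    omega

private lemma lemE (p : ℕ) : ∀ s : ℕ,
    (p + 1) * ∏ i ∈ range s, (p + 2 * i + 2) ≤ (p + 1 + s) * ∏ i ∈ range s, (p + 2 * i + 1) := by
  intro s
  induction s with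
  | zero => simp
  | succ s ih =>
    rw [prod_range_succ, prod_range_succ]
    have key : (p + 1 + s) * (p + 2 * s + 2) ≤ (p + 1 + (s + 1)) * (p + 2 * s + 1) := by
      nlinarith
    calc (p + 1) * ((∏ i ∈ range s, (p + 2 * i + 2)) * (p + 2 * s + 2))
        = ((p + 1) * ∏ i ∈ range s, (p + 2 * i + 2)) * (p + 2 * s + 2) := by ring
      _ ≤ ((p + 1 + s) * ∏ i ∈ range s, (p + 2 * i + 1)) * (p + 2 * s + 2) :=
          Nat.mul_le_mul_right _ ih
      _ = ((p + 1 + s) * (p + 2 * s + 2)) * ∏ i ∈ range s, (p + 2 * i + 1) := by ring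
      _ ≤ ((p + 1 + (s + 1)) * (p + 2 * s + 1)) * ∏ i ∈ range s, (p + 2 * i + 1) :=
          Nat.mul_le_mul_right _ key
      _ = (p + 1 + (s + 1)) * ((∏ i ∈ range s, (p + 2 * i + 1)) * (p + 2 * s + 1)) := by ring

private lemma core_ineq (p s : ℕ) (hs : p + 1 + s ≤ 2 * p) (b : ℕ → ℕ)
    (hb : ∀ i, i < s → p + 2 * i + 2 ≤ b i) :
    (p + 1) * ∏ i ∈ range s, b i ≤ 2 * p * ∏ i ∈ range s, (b i - 1) := by
  have hP : 0 < ∏ i ∈ range s, (p + 2 * i + 1) := prod_pos (by intro i _; omega)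
  refine Nat.le_of_mul_le_mul_right ?_ hP
  have step : ∏ i ∈ range s, (b i * (p + 2 * i + 1))
      ≤ ∏ i ∈ range s, ((p + 2 * i + 2) * (b i - 1)) := by
    apply Finset.prod_le_prod'
    intro i hi
    have h := hb i (mem_range.mp hi)
    have h2 : (b i - 1) + 1 = b i := by omega
    nlinarith [h2, h]
  calc (p + 1) * (∏ i ∈ range s, b i) * ∏ i ∈ range s, (p + 2 * i + 1)
      = (p + 1) * ∏ i ∈ range s, (b i * (p + 2 * i + 1)) := by
        rw [prod_mul_distrib]; ring
    _ ≤ (p + 1) * ∏ i ∈ range s, ((p + 2 * i + 2) * (b i - 1)) :=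
        Nat.mul_le_mul_left _ step
    _ = ((p + 1) * ∏ i ∈ range s, (p + 2 * i + 2)) * ∏ i ∈ range s, (b i - 1) := by
        rw [prod_mul_distrib]; ring
    _ ≤ ((p + 1 + s) * ∏ i ∈ range s, (p + 2 * i + 1)) * ∏ i ∈ range s, (b i - 1) :=
        Nat.mul_le_mul_right _ (lemE p s)
    _ ≤ ((2 * p) * ∏ i ∈ range s, (p + 2 * i + 1)) * ∏ i ∈ range s, (b i - 1) :=
        Nat.mul_le_mul_right _ (Nat.mul_le_mul_right _ hs)
    _ = 2 * p * (∏ i ∈ range s, (b i - 1)) * ∏ i ∈ range s, (p + 2 * i + 1) := by ring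

private lemma sigma_lt_two_mul (n : ℕ)
    (h : (∃ (p s : ℕ) (q α : Fin s → ℕ),
        p.Prime ∧ Odd n ∧ (∀ i, (q i).Prime) ∧ (∀ i, p < q i) ∧ StrictMono q ∧
        (∀ i, 1 ≤ α i) ∧ s ≤ p - 1 ∧ n = p * ∏ i, q i ^ α i) ∨ n = 2) :
    ∑ d ∈ n.divisors, d < 2 * n := by
  rcases h with ⟨p, s, q, α, hp, hodd, hq, hpq, hmono, hα, hs, hn⟩ | rfl
  · have hp2 : 2 ≤ p := hp.two_le
    have hpdvd : p ∣ n := hn ▸ dvd_mul_right p _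
    have hqd : ∀ i : Fin s, q i ∣ n := by
      intro i
      have h1 : q i ∣ q i ^ α i := dvd_pow_self (q i) (by have := hα i; omega)
      have h2 : q i ^ α i ∣ ∏ j, q j ^ α j := Finset.dvd_prod_of_mem _ (mem_univ i)
      exact hn ▸ Dvd.dvd.mul_left (h1.trans h2) p
    have hodd2 : n % 2 = 1 := Nat.odd_iff.mp hodd
    have hdvd_odd : ∀ m, m ∣ n → m % 2 = 1 := by
      intro m hm
      rcases Nat.even_or_odd m with he | ho
      · exfalso
        obtain ⟨k, hk⟩ := he.two_dvd.trans hm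
        omega
      · exact Nat.odd_iff.mp ho
    have hp3 : 3 ≤ p := by have := hdvd_odd p hpdvd; omega
    have qodd : ∀ i : Fin s, q i % 2 = 1 := fun i => hdvd_odd _ (hqd i)
    have gap : ∀ k, ∀ hk : k < s, p + 2 * k + 2 ≤ q ⟨k, hk⟩ := by
      intro k
      induction k with
      | zero =>
        intro hk
        have h1 := hpq ⟨0, hk⟩
        have h2 := qodd ⟨0, hk⟩
        have h3 := hdvd_odd p hpdvd
        omega
      | succ k ih =>
        intro hk
        have hk' : k < s := by omega
        have h1 := ih hk'
        have h2 : q ⟨k, hk'⟩ < q ⟨k + 1, hk⟩ := hmono (by simp [Fin.lt_def])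
        have h3 := qodd ⟨k + 1, hk⟩
        have h4 := qodd ⟨k, hk'⟩
        omega
    -- sigma is multiplicative
    have hcop : ∀ i ∈ (univ : Finset (Fin s)), ∀ j ∈ (univ : Finset (Fin s)), i ≠ j →
        Nat.Coprime (q i ^ α i) (q j ^ α j) := by
      intro i _ j _ hij
      exact Nat.Coprime.pow _ _ ((Nat.coprime_primes (hq i) (hq j)).mpr
        (fun he => hij (hmono.injective he)))
    have hcop_p : Nat.Coprime p (∏ i, q i ^ α i) := by
      apply Nat.Coprime.prod_right
      intro i _
      exact Nat.Coprime.pow_right _ ((Nat.coprime_primes hp (hq i)).mpr (Nat.ne_of_lt (hpq i)))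
    have hσp : (ArithmeticFunction.sigma 1) p = p + 1 := by
      rw [ArithmeticFunction.sigma_one_apply, hp.divisors,
        Finset.sum_pair (by omega : (1 : ℕ) ≠ p)]
      omega
    have hmul : (ArithmeticFunction.sigma 1) n
        = (p + 1) * ∏ i, (ArithmeticFunction.sigma 1) (q i ^ α i) := by
      rw [hn, ArithmeticFunction.isMultiplicative_sigma.map_mul_of_coprime hcop_p, hσp,
        ArithmeticFunction.IsMultiplicative.map_prod _
          ArithmeticFunction.isMultiplicative_sigma univ
          (fun i _ j _ hij => hcop i (mem_univ i) j (mem_univ j) hij)]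
    have hGi : ∀ i : Fin s, (q i - 1) * (ArithmeticFunction.sigma 1) (q i ^ α i)
        = q i ^ (α i + 1) - 1 := by
      intro i
      rw [ArithmeticFunction.sigma_one_apply, Nat.sum_divisors_prime_pow (hq i)]
      exact geom_aux (q i) (by have := (hq i).two_le; omega) (α i + 1)
    have hsig : ∑ d ∈ n.divisors, d = (ArithmeticFunction.sigma 1) n :=
      (ArithmeticFunction.sigma_one_apply n).symm
    rcases Nat.eq_zero_or_pos s with hs0 | hs0
    · subst hs0
      have hnp : n = p := by simpa using hn
      rw [hsig, hmul, hnp]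
      simp only [Finset.univ_eq_empty, Finset.prod_empty, mul_one]
      omega
    · -- main case s ≥ 1
      haveI : Nonempty (Fin s) := ⟨⟨0, hs0⟩⟩
      -- core inequality transported to Fin s
      set b : ℕ → ℕ := fun j => if h : j < s then q ⟨j, h⟩ else 0 with hbdef
      have hb1 : ∏ i : Fin s, q i = ∏ j ∈ range s, b j := by
        rw [← Fin.prod_univ_eq_prod_range b s]
        apply Finset.prod_congr rfl
        intro i _
        simp [hbdef, i.isLt]
      have hb2 : ∏ i : Fin s, (q i - 1) = ∏ j ∈ range s, (b j - 1) := by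
        rw [← Fin.prod_univ_eq_prod_range (fun j => b j - 1) s]
        apply Finset.prod_congr rfl
        intro i _
        simp [hbdef, i.isLt]
      have hbge : ∀ j, j < s → p + 2 * j + 2 ≤ b j := by
        intro j hj
        simpa [hbdef, hj] using gap j hj
      have coreFin : (p + 1) * ∏ i : Fin s, q i ≤ 2 * p * ∏ i : Fin s, (q i - 1) := by
        rw [hb1, hb2]
        exact core_ineq p s (by omega) b hbge
      have key : ∏ i : Fin s, (q i ^ (α i + 1) - 1) < ∏ i : Fin s, q i ^ (α i + 1) := by
        apply Finset.prod_lt_prod_of_nonempty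
        · intro i _
          have h2 : 2 ≤ q i := (hq i).two_le
          have h3 : q i ≤ q i ^ (α i + 1) := Nat.le_self_pow (by omega) _
          omega
        · intro i _
          have : 0 < q i ^ (α i + 1) := pow_pos (hq i).pos _
          omega
        · exact univ_nonempty
      rw [hsig, hmul, hn]
      set P1 := ∏ i : Fin s, (q i - 1) with hP1def
      refine Nat.lt_of_mul_lt_mul_right (a := P1) ?_
      calc ((p + 1) * ∏ i, (ArithmeticFunction.sigma 1) (q i ^ α i)) * P1
          = (p + 1) * ∏ i, ((q i - 1) * (ArithmeticFunction.sigma 1) (q i ^ α i)) := by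
            rw [prod_mul_distrib]; ring
        _ = (p + 1) * ∏ i, (q i ^ (α i + 1) - 1) := by
            congr 1
            exact Finset.prod_congr rfl (fun i _ => hGi i)
        _ < (p + 1) * ∏ i, q i ^ (α i + 1) := by
            exact (Nat.mul_lt_mul_left (by omega)).mpr key
        _ = ((p + 1) * ∏ i, q i) * ∏ i, q i ^ α i := by
            simp only [pow_succ]
            rw [prod_mul_distrib]
            ring
        _ ≤ (2 * p * P1) * ∏ i, q i ^ α i := Nat.mul_le_mul_right _ coreFin
        _ = (2 * (p * ∏ i, q i ^ α i)) * P1 := by ring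
  · decide

private lemma not_covering_of_sigma (n : ℕ) (hn : 0 < n)
    (hσ : ∑ d ∈ n.divisors, d < 2 * n) (a : ℕ → ℤ) :
    ¬ ∀ x : ℤ, ∃ d : ℕ, d ∣ n ∧ 1 < d ∧ x ≡ a d [ZMOD (d : ℤ)] := by
  intro H
  classical
  set D := n.divisors.erase 1 with hD
  set C : ℕ → Finset ℕ := fun d => (range n).filter (fun x => (x : ℤ) % d = a d % d) with hC
  have hsub : range n ⊆ D.biUnion C := by
    intro x hx
    obtain ⟨d, hdvd, hd1, hmod⟩ := H x
    refine mem_biUnion.mpr ⟨d, ?_, ?_⟩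
    · exact mem_erase.mpr ⟨by omega, Nat.mem_divisors.mpr ⟨hdvd, hn.ne'⟩⟩
    · exact mem_filter.mpr ⟨hx, hmod⟩
  have hcard : ∀ d ∈ D, (C d).card ≤ n / d := by
    intro d hd
    obtain ⟨hd1, hdd⟩ := mem_erase.mp hd
    obtain ⟨hdvd, _⟩ := Nat.mem_divisors.mp hdd
    have hle : (C d).card ≤ (range (n / d)).card := by
      apply Finset.card_le_card_of_injOn (fun x => x / d)
      · intro x hx
        have hx' := (mem_filter.mp hx).1
        exact mem_range.mpr (Nat.div_lt_div_of_lt_of_dvd hdvd (mem_range.mp hx'))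
      · intro x hx y hy hxy
        simp only [mem_coe, hC, mem_filter, mem_range] at hx hy
        have h1 : (x : ℤ) % (d : ℤ) = (y : ℤ) % (d : ℤ) := hx.2.trans hy.2.symm
        have h2 : x % d = y % d := by exact_mod_cast (by push_cast; exact h1 :
          ((x % d : ℕ) : ℤ) = ((y % d : ℕ) : ℤ))
        have hxy' : x / d = y / d := hxy
        calc x = d * (x / d) + x % d := (Nat.div_add_mod x d).symm
          _ = d * (y / d) + y % d := by rw [hxy', h2]
          _ = y := Nat.div_add_mod y d
    simpa using hle
  have h1 : n ≤ ∑ d ∈ D, (C d).card := by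
    calc n = (range n).card := (card_range n).symm
      _ ≤ (D.biUnion C).card := card_le_card hsub
      _ ≤ ∑ d ∈ D, (C d).card := card_biUnion_le
  have h2 : ∑ d ∈ D, (C d).card ≤ ∑ d ∈ D, n / d := sum_le_sum hcard
  have h3 : n / 1 + ∑ d ∈ D, n / d = ∑ d ∈ n.divisors, n / d :=
    Finset.add_sum_erase _ _ (Nat.one_mem_divisors.mpr hn.ne')
  have h4 : ∑ d ∈ n.divisors, n / d = ∑ d ∈ n.divisors, d := by
    simpa using Nat.sum_div_divisors n id
  simp only [Nat.div_one] at h3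
  omega

/-- Let `n = p * q 1 ^ α 1 * ⋯ * q s ^ α s` with `p < q 1 < ⋯ < q s` primes, `α i ≥ 1`,
`0 ≤ s ≤ p - 1`, and `n` odd — or `n = 2`. Then no congruence set
`{a d mod d : d ∣ n, d > 1}` whose moduli are the divisors of `n` greater than `1`
is a covering system. -/
theorem case1_not_covering (n : ℕ)
    (h : (∃ (p s : ℕ) (q α : Fin s → ℕ),
        p.Prime ∧ Odd n ∧ (∀ i, (q i).Prime) ∧ (∀ i, p < q i) ∧ StrictMono q ∧
        (∀ i, 1 ≤ α i) ∧ s ≤ p - 1 ∧ n = p * ∏ i, q i ^ α i) ∨ n = 2)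
    (a : ℕ → ℤ) :
    ¬ ∀ x : ℤ, ∃ d : ℕ, d ∣ n ∧ 1 < d ∧ x ≡ a d [ZMOD (d : ℤ)] := by
  have hn : 0 < n := by
    rcases h with ⟨p, s, q, α, hp, _, hq, _, _, hα, _, hn⟩ | rfl
    · rw [hn]
      exact Nat.mul_pos hp.pos (prod_pos fun i _ => pow_pos (hq i).pos _)
    · omega
  exact not_covering_of_sigma n hn (sigma_lt_two_mul n h) a
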